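/- arXiv:1901.01322 — 3 statements merged into one kernel-verified Lean document; each statement's English description precedes it below -/
import Mathlib

section
/- Let $I \subset \mathbb{R}$ be a compact interval containing distinct points $\eta_1, \dots, \eta_n$ and $\mu$, and let $\Lambda_{n-1} = \max_{\xi \in I} \sum_{i=1}^n |\ell_i(\xi)|$ be the Lebesgue constant of the Lagrange basis $\ell_i$ for the nodes $\eta_1, \dots, \eta_n$. Suppose each $\Phi_i : \mathbb{R}^d \to \mathbb{R}^d$ is Lipschitz with constant $L$ and $\Lambda_{n-1} L |I| < 1$. Then there exists a unique polynomial curve $X$ of degree at most $n$ restricted to $I$ satisfying $X(\mu) = x$ and $X'(\eta_i) = \Phi_i(X(\eta_i))$ for all $i$. -/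
open Polynomial Set

/-- A curve `X : ℝ → ℝ^d` is a polynomial curve of degree at most `n` if every
component is (the evaluation of) a polynomial of degree at most `n`. -/
def IsPolyCurve (d n : ℕ) (X : ℝ → EuclideanSpace ℝ (Fin d)) : Prop :=
  ∃ p : Fin d → Polynomial ℝ,
    (∀ j, (p j).natDegree ≤ n) ∧ ∀ t j, X t j = (p j).eval t

/-- A formal antiderivative of a real polynomial. -/
noncomputable def pint (p : ℝ[X]) : ℝ[X] :=
  ∑ k ∈ Finset.range (p.natDegree + 1), C (p.coeff k / (k + 1)) * X ^ (k + 1)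

lemma derivative_pint (p : ℝ[X]) : derivative (pint p) = p := by
  unfold pint
  rw [derivative_sum]
  have h : ∀ k ∈ Finset.range (p.natDegree + 1),
      derivative (C (p.coeff k / (k + 1)) * X ^ (k + 1) : ℝ[X]) = C (p.coeff k) * X ^ k := by
    intro k _
    rw [derivative_C_mul, derivative_X_pow]
    push_cast
    rw [← mul_assoc, ← C_mul]
    congr 1
    rw [div_mul_cancel₀]
    positivity
  rw [Finset.sum_congr rfl h]
  conv_rhs => rw [p.as_sum_range' (p.natDegree + 1) (Nat.lt_succ_self _)]
  exact Finset.sum_congr rfl fun k _ => C_mul_X_pow_eq_monomial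

lemma natDegree_pint (p : ℝ[X]) : (pint p).natDegree ≤ p.natDegree + 1 := by
  unfold pint
  refine Polynomial.natDegree_sum_le_of_forall_le _ _ fun k hk => ?_
  refine le_trans (natDegree_C_mul_le _ _) ?_
  simpa using Finset.mem_range_succ_iff.mp hk

lemma euclid_sum_apply {d : ℕ} {ι : Type*} (s : Finset ι)
    (f : ι → EuclideanSpace ℝ (Fin d)) (j : Fin d) :
    (∑ i ∈ s, f i) j = ∑ i ∈ s, f i j := by
  classical
  induction s using Finset.induction with
  | empty => simp [PiLp.zero_apply]
  | insert _ _ h ih => rw [Finset.sum_insert h, Finset.sum_insert h, PiLp.add_apply, ih]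

lemma hasDerivAt_euclidean {d : ℕ} {f : ℝ → EuclideanSpace ℝ (Fin d)}
    {f' : EuclideanSpace ℝ (Fin d)} {t : ℝ}
    (h : ∀ j, HasDerivAt (fun s => f s j) (f' j) t) : HasDerivAt f f' t := by
  have h1 : HasDerivAt (fun s => (EuclideanSpace.equiv (Fin d) ℝ) (f s))
      ((EuclideanSpace.equiv (Fin d) ℝ) f') t := hasDerivAt_pi.mpr h
  have h2 := ((EuclideanSpace.equiv (Fin d) ℝ).symm.toContinuousLinearMap).hasFDerivAt.comp_hasDerivAt
      t h1
  have h3 : (⇑(EuclideanSpace.equiv (Fin d) ℝ).symm ∘ fun s => (EuclideanSpace.equiv (Fin d) ℝ) (f s)) = f := by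
    funext s; simp
  convert h2 using 1
  · rfl
  · rfl
  · rfl
  · exact h3.symm
  · simp

theorem stmt_1 (d n : ℕ) (a b : ℝ) (hab : a ≤ b)
    (η : Fin n → ℝ) (hη : Function.Injective η)
    (hηI : ∀ i, η i ∈ Set.Icc a b) (μ : ℝ) (hμ : μ ∈ Set.Icc a b)
    (Φ : Fin n → EuclideanSpace ℝ (Fin d) → EuclideanSpace ℝ (Fin d))
    (L Λ : ℝ) (hL : 0 ≤ L)
    (hlip : ∀ i y z, ‖Φ i y - Φ i z‖ ≤ L * ‖y - z‖)
    (hΛ : IsGreatest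
      ((fun ξ => ∑ i, |(Lagrange.basis Finset.univ η i).eval ξ|) '' Set.Icc a b) Λ)
    (hsmall : Λ * L * (b - a) < 1)
    (x : EuclideanSpace ℝ (Fin d)) :
    ∃ X : ℝ → EuclideanSpace ℝ (Fin d), IsPolyCurve d n X ∧
      X μ = x ∧ (∀ i, deriv X (η i) = Φ i (X (η i))) ∧
      ∀ Y : ℝ → EuclideanSpace ℝ (Fin d), IsPolyCurve d n Y → Y μ = x →
        (∀ i, deriv Y (η i) = Φ i (Y (η i))) →
        ∀ t ∈ Set.Icc a b, Y t = X t := by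
  classical
  rcases Nat.eq_zero_or_pos n with hn | hn
  · -- degenerate case: constant curve
    subst hn
    refine ⟨fun _ => x, ⟨fun j => C (x j), fun j => by simp, fun t j => by simp⟩, rfl,
      fun i => i.elim0, ?_⟩
    rintro Y ⟨q, hqdeg, hqeval⟩ hYμ _ t ht
    ext j
    have hq : q j = C ((q j).coeff 0) := Polynomial.eq_C_of_natDegree_le_zero (hqdeg j)
    have h1 := hqeval t j
    have h2 := hqeval μ j
    rw [hq, eval_C] at h1 h2
    show Y t j = x j
    rw [h1, ← h2, ← hYμ]
  -- interesting case : n ≥ 1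
  have hinj : Set.InjOn η (Finset.univ : Finset (Fin n)) := hη.injOn
  set ℓ : Fin n → ℝ[X] := fun i => Lagrange.basis Finset.univ η i with hℓdef
  set A : Fin n → ℝ[X] := fun i => pint (ℓ i) with hAdef
  set g : Fin n → ℝ → ℝ := fun i t => (A i).eval t - (A i).eval μ with hgdef
  have hΛ0 : 0 ≤ Λ :=
    le_trans (Finset.sum_nonneg fun i _ => abs_nonneg _) (hΛ.2 ⟨μ, hμ, rfl⟩)
  have hsum_le : ∀ ξ ∈ Icc a b, ∑ i, |(ℓ i).eval ξ| ≤ Λ := fun ξ hξ => hΛ.2 ⟨ξ, hξ, rfl⟩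
  have hgderiv : ∀ i t, HasDerivAt (g i) ((ℓ i).eval t) t := by
    intro i t
    have h := ((A i).hasDerivAt t).sub_const ((A i).eval μ)
    rw [hAdef] at h
    rwa [derivative_pint] at h
  have hgμ : ∀ i, g i μ = 0 := fun i => sub_self _
  -- the key Lebesgue-constant bound
  have hgsum : ∀ s ∈ Icc a b, ∑ i, |g i s| ≤ Λ * (b - a) := by
    intro s hs
    set ε : Fin n → ℝ := fun i => if 0 ≤ g i s then 1 else -1 with hε
    have hε1 : ∀ i, |ε i| = 1 := by intro i; rw [hε]; dsimp only; split_ifs <;> simp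
    have key : ∀ i, ε i * g i s = |g i s| := by
      intro i; rw [hε]; dsimp only; split_ifs with h
      · rw [one_mul, abs_of_nonneg h]
      · rw [neg_one_mul, abs_of_neg (lt_of_not_ge h)]
    have hmvt : ‖(∑ i, ε i * (A i).eval s) - (∑ i, ε i * (A i).eval μ)‖ ≤ Λ * ‖s - μ‖ := by
      refine Convex.norm_image_sub_le_of_norm_hasDerivWithin_le
        (f := fun ξ => ∑ i, ε i * (A i).eval ξ) (f' := fun ξ => ∑ i, ε i * (ℓ i).eval ξ)
        (fun ξ _ => ?_) (fun ξ hξ => ?_) (convex_Icc a b) hμ hs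
      · refine (HasDerivAt.fun_sum fun i _ => ?_).hasDerivWithinAt
        have h := ((A i).hasDerivAt ξ).const_mul (ε i)
        rw [hAdef] at h
        rwa [derivative_pint] at h
      · calc ‖∑ i, ε i * (ℓ i).eval ξ‖ ≤ ∑ i, |ε i * (ℓ i).eval ξ| :=
              Finset.abs_sum_le_sum_abs _ _
          _ = ∑ i, |(ℓ i).eval ξ| := by
              refine Finset.sum_congr rfl fun i _ => ?_; rw [abs_mul, hε1, one_mul]
          _ ≤ Λ := hsum_le ξ hξ
    have heq : ∑ i, |g i s| = (∑ i, ε i * (A i).eval s) - (∑ i, ε i * (A i).eval μ) := by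
      rw [← Finset.sum_sub_distrib]
      refine Finset.sum_congr rfl fun i _ => ?_
      rw [← key i, hgdef]; ring
    have habs : ‖s - μ‖ ≤ b - a := by
      rw [Real.norm_eq_abs, abs_sub_le_iff]
      constructor <;> [linarith [hs.1, hs.2, hμ.1, hμ.2]; linarith [hs.1, hs.2, hμ.1, hμ.2]]
    have h1 : ∑ i, |g i s| ≤ Λ * ‖s - μ‖ := by
      rw [heq]
      exact le_trans (le_abs_self _) (by simpa [Real.norm_eq_abs] using hmvt)
    exact le_trans h1 (mul_le_mul_of_nonneg_left habs hΛ0)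
  -- the contraction on vectors of node values
  set T : (Fin n → EuclideanSpace ℝ (Fin d)) → (Fin n → EuclideanSpace ℝ (Fin d)) :=
    fun v j => x + ∑ i, g i (η j) • Φ i (v i) with hTdef
  have hK0 : 0 ≤ Λ * L * (b - a) := by
    have : (0:ℝ) ≤ b - a := by linarith
    positivity
  have hTlip : ∀ v u, dist (T v) (T u) ≤ (Λ * L * (b - a)) * dist v u := by
    intro v u
    refine (dist_pi_le_iff (mul_nonneg hK0 dist_nonneg)).mpr fun j => ?_
    rw [dist_eq_norm]
    have hdiff : T v j - T u j = ∑ i, g i (η j) • (Φ i (v i) - Φ i (u i)) := by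
      rw [hTdef]; dsimp only
      rw [add_sub_add_left_eq_sub, ← Finset.sum_sub_distrib]
      exact Finset.sum_congr rfl fun i _ => (smul_sub _ _ _).symm
    rw [hdiff]
    calc ‖∑ i, g i (η j) • (Φ i (v i) - Φ i (u i))‖
        ≤ ∑ i, ‖g i (η j) • (Φ i (v i) - Φ i (u i))‖ := norm_sum_le _ _
      _ = ∑ i, |g i (η j)| * ‖Φ i (v i) - Φ i (u i)‖ := by
          refine Finset.sum_congr rfl fun i _ => ?_; rw [norm_smul, Real.norm_eq_abs]
      _ ≤ ∑ i, |g i (η j)| * (L * dist v u) := by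
          refine Finset.sum_le_sum fun i _ => mul_le_mul_of_nonneg_left ?_ (abs_nonneg _)
          calc ‖Φ i (v i) - Φ i (u i)‖ ≤ L * ‖v i - u i‖ := hlip i _ _
            _ = L * dist (v i) (u i) := by rw [dist_eq_norm]
            _ ≤ L * dist v u := mul_le_mul_of_nonneg_left (dist_le_pi_dist v u i) hL
      _ = (∑ i, |g i (η j)|) * (L * dist v u) := (Finset.sum_mul _ _ _).symm
      _ ≤ (Λ * (b - a)) * (L * dist v u) :=
          mul_le_mul_of_nonneg_right (hgsum _ (hηI j))
            (mul_nonneg hL dist_nonneg)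
      _ = (Λ * L * (b - a)) * dist v u := by ring
  have hT : ContractingWith ⟨Λ * L * (b - a), hK0⟩ T := by
    constructor
    · exact_mod_cast hsmall
    · exact LipschitzWith.of_dist_le_mul fun v u => hTlip v u
  set v : Fin n → EuclideanSpace ℝ (Fin d) := ContractingWith.fixedPoint T hT with hvdef
  have hv : T v = v := hT.fixedPoint_isFixedPt
  set w : Fin n → EuclideanSpace ℝ (Fin d) := fun i => Φ i (v i) with hwdef
  set X : ℝ → EuclideanSpace ℝ (Fin d) := fun t => x + ∑ i, g i t • w i with hXdef
  have hXη : ∀ k, X (η k) = v k := fun k => congrFun hv k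
  have hXderiv : ∀ t, HasDerivAt X (∑ i, (ℓ i).eval t • w i) t := by
    intro t
    rw [hXdef]
    exact HasDerivAt.const_add x (HasDerivAt.fun_sum fun i _ => (hgderiv i t).smul_const (w i))
  have hδ : ∀ k, ∑ i, (ℓ i).eval (η k) • w i = w k := by
    intro k
    rw [Finset.sum_eq_single k]
    · rw [hℓdef]; dsimp only
      rw [Lagrange.eval_basis_self hinj (Finset.mem_univ k), one_smul]
    · intro i _ hik
      rw [hℓdef]; dsimp only
      rw [Lagrange.eval_basis_of_ne hik (Finset.mem_univ k), zero_smul]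
    · intro h; exact absurd (Finset.mem_univ k) h
  have hdegA : ∀ i, (A i).natDegree ≤ n := by
    intro i
    refine le_trans (natDegree_pint _) ?_
    rw [hℓdef]; dsimp only
    rw [Lagrange.natDegree_basis hinj (Finset.mem_univ i)]
    simp [Nat.sub_add_cancel hn]
  refine ⟨X, ?_, ?_, ?_, ?_⟩
  · -- polynomial curve
    refine ⟨fun j => C (x j) + ∑ i, C (w i j) * (A i - C ((A i).eval μ)), fun j => ?_,
      fun t j => ?_⟩
    · refine le_trans (natDegree_add_le _ _) (max_le (by simp) ?_)
      refine Polynomial.natDegree_sum_le_of_forall_le _ _ fun i _ => ?_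
      refine le_trans (natDegree_C_mul_le _ _) ?_
      refine le_trans (natDegree_sub_le _ _) (max_le (hdegA i) (by simp))
    · rw [hXdef]; dsimp only
      rw [PiLp.add_apply, euclid_sum_apply]
      rw [eval_add, eval_C, eval_finset_sum]
      congr 1
      refine Finset.sum_congr rfl fun i _ => ?_
      rw [PiLp.smul_apply, eval_mul, eval_C, eval_sub, eval_C, smul_eq_mul, hgdef]
      ring
  · -- initial condition
    rw [hXdef]; dsimp only
    have : ∀ i ∈ Finset.univ, g i μ • w i = 0 := fun i _ => by rw [hgμ i, zero_smul]
    rw [Finset.sum_congr rfl this, Finset.sum_const_zero, add_zero]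
  · -- collocation conditions
    intro i
    rw [(hXderiv (η i)).deriv, hδ i, hXη i]
  · -- uniqueness
    rintro Y ⟨q, hqdeg, hqeval⟩ hYμ hYd t ht
    have hYcomp : ∀ j, (fun s => Y s j) = fun s => (q j).eval s :=
      fun j => funext fun s => hqeval s j
    have hderivY : ∀ s, deriv Y s =
        (WithLp.toLp 2 (fun j => (derivative (q j)).eval s) : EuclideanSpace ℝ (Fin d)) := by
      intro s
      refine HasDerivAt.deriv (hasDerivAt_euclidean fun j => ?_)
      rw [hYcomp j]
      exact (q j).hasDerivAt s
    have hw' : ∀ i j, (derivative (q j)).eval (η i) = (Φ i (Y (η i))) j := by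
      intro i j
      have h1 : deriv Y (η i) j = (Φ i (Y (η i))) j := by rw [hYd i]
      rw [← h1, hderivY]
    have hdq : ∀ j, derivative (q j) = ∑ i, C ((Φ i (Y (η i))) j) * ℓ i := by
      intro j
      have hdeg : (derivative (q j)).degree < (Finset.univ : Finset (Fin n)).card := by
        rw [Finset.card_univ, Fintype.card_fin]
        rcases eq_or_ne (derivative (q j)) 0 with h | h
        · rw [h, degree_zero]; exact_mod_cast WithBot.bot_lt_coe n
        · rw [degree_eq_natDegree h]
          exact_mod_cast lt_of_le_of_lt
            (le_trans (natDegree_derivative_le (q j)) (Nat.sub_le_sub_right (hqdeg j) 1))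
            (Nat.sub_lt hn one_pos)
      have h := Lagrange.eq_interpolate hinj hdeg
      rw [Lagrange.interpolate_apply] at h
      rw [h]
      exact Finset.sum_congr rfl fun i _ => by rw [hw' i j, hℓdef]
    have hq_eq : ∀ j, q j = C (x j) + ∑ i, C ((Φ i (Y (η i))) j) * (A i - C ((A i).eval μ)) := by
      intro j
      set r : ℝ[X] := C (x j) + ∑ i, C ((Φ i (Y (η i))) j) * (A i - C ((A i).eval μ)) with hr
      have hdr : derivative r = derivative (q j) := by
        rw [hr, hdq j, derivative_add, derivative_C, zero_add, derivative_sum]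
        refine Finset.sum_congr rfl fun i _ => ?_
        rw [derivative_C_mul, derivative_sub, derivative_C, sub_zero, hAdef]
        dsimp only
        rw [derivative_pint]
      have hd0 : derivative (q j - r) = 0 := by
        rw [derivative_sub, hdr, sub_self]
      have hcc : q j - r = C ((q j - r).coeff 0) :=
        Polynomial.eq_C_of_natDegree_eq_zero
          (Polynomial.natDegree_eq_zero_of_derivative_eq_zero hd0)
      have hqμ : (q j).eval μ = x j := by
        rw [← hqeval μ j]
        exact congrArg (fun z => z j) hYμ
      have hrμ : r.eval μ = x j := by
        rw [hr, eval_add, eval_C, eval_finset_sum]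
        have : ∀ i ∈ Finset.univ,
            ((C ((Φ i (Y (η i))) j) * (A i - C ((A i).eval μ))).eval μ) = 0 := by
          intro i _
          rw [eval_mul, eval_sub, eval_C, eval_C, sub_self, mul_zero]
        rw [Finset.sum_congr rfl this, Finset.sum_const_zero, add_zero]
      have hc0 : (q j - r).coeff 0 = 0 := by
        have := congrArg (eval μ) hcc
        rw [eval_sub, hqμ, hrμ, sub_self, eval_C] at this
        exact this.symm
      have : q j - r = 0 := by rw [hcc, hc0, map_zero]
      exact sub_eq_zero.mp this
    have hYform : ∀ s, Y s = x + ∑ i, g i s • Φ i (Y (η i)) := by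
      intro s
      ext j
      show Y s j = (x + ∑ i, g i s • Φ i (Y (η i))) j
      rw [hqeval s j, hq_eq j, PiLp.add_apply, euclid_sum_apply]
      rw [eval_add, eval_C, eval_finset_sum]
      congr 1
      refine Finset.sum_congr rfl fun i _ => ?_
      rw [PiLp.smul_apply, eval_mul, eval_C, eval_sub, eval_C, smul_eq_mul, hgdef]
      ring
    have hu : T (fun i => Y (η i)) = fun i => Y (η i) := by
      funext k
      exact (hYform (η k)).symm
    have huv : (fun i => Y (η i)) = v := hT.fixedPoint_unique hu
    rw [hYform t, hXdef]
    dsimp only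
    congr 1
    refine Finset.sum_congr rfl fun i _ => ?_
    rw [show Y (η i) = v i from congrFun huv i, hwdef]
end

section
/- Let $\mathcal{I}_{n-1}$ denote the Lagrange interpolation operator on $n$ distinct nodes $\eta_1,\dots,\eta_n$ in a compact interval $I$ containing $\mu$, with Lebesgue constant $\Lambda_{n-1}$. Suppose each $\Phi_i : \mathbb{R}^d \to \mathbb{R}^d$ is Lipschitz with constant $L$. Define $F$ on continuous curves $X : I \to \mathbb{R}^d$ by $F[X](\xi) = x + \int_\mu^\xi p_X(\gamma)\, d\gamma$, where $p_X$ is the unique polynomial of degree $\le n-1$ with $p_X(\eta_i) = \Phi_i(X(\eta_i))$. Then for all continuous $X, Y$, $\max_{\xi \in I} |F[X](\xi) - F[Y](\xi)| \le \Lambda_{n-1} L |I| \max_{\xi \in I} |X(\xi) - Y(\xi)|$. -/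
open Polynomial Set MeasureTheory

theorem stmt_2 (d n : ℕ) (a b : ℝ) (hab : a ≤ b)
    (η : Fin n → ℝ) (hη : Function.Injective η)
    (hηI : ∀ i, η i ∈ Set.Icc a b) (μ : ℝ) (hμ : μ ∈ Set.Icc a b)
    (Φ : Fin n → EuclideanSpace ℝ (Fin d) → EuclideanSpace ℝ (Fin d))
    (L Λ : ℝ) (hL : 0 ≤ L)
    (hlip : ∀ i y z, ‖Φ i y - Φ i z‖ ≤ L * ‖y - z‖)
    (hΛ : IsGreatest
      ((fun ξ => ∑ i, |(Lagrange.basis Finset.univ η i).eval ξ|) '' Set.Icc a b) Λ)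
    (x : EuclideanSpace ℝ (Fin d))
    (F : (ℝ → EuclideanSpace ℝ (Fin d)) → ℝ → EuclideanSpace ℝ (Fin d))
    (hF : ∀ X ξ j, F X ξ j = x j +
      ∫ γ in μ..ξ, (Lagrange.interpolate Finset.univ η fun i => Φ i (X (η i)) j).eval γ)
    (X Y : ℝ → EuclideanSpace ℝ (Fin d)) (hX : Continuous X) (hY : Continuous Y)
    (C : ℝ) (hC : IsGreatest ((fun ξ => ‖X ξ - Y ξ‖) '' Set.Icc a b) C) :
    ∀ ξ ∈ Set.Icc a b, ‖F X ξ - F Y ξ‖ ≤ Λ * L * (b - a) * C := by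
  intro ξ hξ
  obtain ⟨t0, ht0, hΛeq⟩ := hΛ.1
  have hΛ0 : 0 ≤ Λ := hΛeq ▸ Finset.sum_nonneg (fun i _ => abs_nonneg _)
  have hC0 : 0 ≤ C := by
    obtain ⟨t, ht, hteq⟩ := hC.1
    rw [← hteq]; exact norm_nonneg _
  set v : Fin n → EuclideanSpace ℝ (Fin d) := fun i => Φ i (X (η i)) - Φ i (Y (η i)) with hv
  have hvC : ∀ i, ‖v i‖ ≤ L * C := fun i =>
    le_trans (hlip i _ _) (mul_le_mul_of_nonneg_left (hC.2 ⟨η i, hηI i, rfl⟩) hL)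
  set g : ℝ → EuclideanSpace ℝ (Fin d) :=
    fun γ => ∑ i, ((Lagrange.basis Finset.univ η i).eval γ) • v i with hg
  have hgcont : Continuous g := by
    apply continuous_finset_sum
    intro i _
    exact ((Lagrange.basis Finset.univ η i).continuous).smul continuous_const
  have hgint : IntervalIntegrable g volume μ ξ := hgcont.intervalIntegrable _ _
  have key : F X ξ - F Y ξ = ∫ γ in μ..ξ, g γ := by
    ext j
    have h1 : (∫ γ in μ..ξ, g γ) j = ∫ γ in μ..ξ, (g γ) j := by
      exact ((EuclideanSpace.proj (𝕜 := ℝ) j).intervalIntegral_comp_comm hgint).symm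
    have h2 : ∀ γ, (g γ) j =
        ∑ i, ((Lagrange.basis Finset.univ η i).eval γ) * (v i j) := by
      intro γ
      calc g γ j = (EuclideanSpace.proj (𝕜 := ℝ) j) (g γ) := rfl
        _ = ∑ i, (EuclideanSpace.proj (𝕜 := ℝ) j)
              (((Lagrange.basis Finset.univ η i).eval γ) • v i) := map_sum _ _ _
        _ = ∑ i, ((Lagrange.basis Finset.univ η i).eval γ) * (v i j) := by
            refine Finset.sum_congr rfl fun i _ => ?_
            rw [_root_.map_smul]; rfl
    have hint1 : IntervalIntegrable
        (fun γ => (Lagrange.interpolate Finset.univ η fun i => Φ i (X (η i)) j).eval γ)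
        volume μ ξ := (Polynomial.continuous _).intervalIntegrable _ _
    have hint2 : IntervalIntegrable
        (fun γ => (Lagrange.interpolate Finset.univ η fun i => Φ i (Y (η i)) j).eval γ)
        volume μ ξ := (Polynomial.continuous _).intervalIntegrable _ _
    have hsub : (F X ξ - F Y ξ) j = F X ξ j - F Y ξ j := rfl
    rw [hsub, hF, hF, h1]
    rw [show (x j + ∫ γ in μ..ξ, (Lagrange.interpolate Finset.univ η fun i => Φ i (X (η i)) j).eval γ)
        - (x j + ∫ γ in μ..ξ, (Lagrange.interpolate Finset.univ η fun i => Φ i (Y (η i)) j).eval γ)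
        = (∫ γ in μ..ξ, (Lagrange.interpolate Finset.univ η fun i => Φ i (X (η i)) j).eval γ)
        - ∫ γ in μ..ξ, (Lagrange.interpolate Finset.univ η fun i => Φ i (Y (η i)) j).eval γ from by ring]
    rw [← intervalIntegral.integral_sub hint1 hint2]
    apply intervalIntegral.integral_congr
    intro γ _
    dsimp only
    rw [h2 γ]
    simp only [Lagrange.interpolate_apply, eval_finset_sum, eval_mul, eval_C,
      ← Finset.sum_sub_distrib]
    apply Finset.sum_congr rfl
    intro i _
    have : v i j = Φ i (X (η i)) j - Φ i (Y (η i)) j := rfl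
    rw [this]; ring
  rw [key]
  have habs : |ξ - μ| ≤ b - a := by
    rw [abs_le]
    constructor <;> [linarith [hξ.1, hμ.2]; linarith [hξ.2, hμ.1]]
  have hbound : ∀ γ ∈ Set.uIoc μ ξ, ‖g γ‖ ≤ Λ * (L * C) := by
    intro γ hγ
    have hγI : γ ∈ Set.Icc a b :=
      Set.uIcc_subset_Icc hμ hξ (Set.uIoc_subset_uIcc hγ)
    calc ‖g γ‖ ≤ ∑ i, ‖((Lagrange.basis Finset.univ η i).eval γ) • v i‖ :=
          norm_sum_le _ _
      _ = ∑ i, |(Lagrange.basis Finset.univ η i).eval γ| * ‖v i‖ := by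
          simp [norm_smul, Real.norm_eq_abs]
      _ ≤ ∑ i, |(Lagrange.basis Finset.univ η i).eval γ| * (L * C) :=
          Finset.sum_le_sum (fun i _ =>
            mul_le_mul_of_nonneg_left (hvC i) (abs_nonneg _))
      _ = (∑ i, |(Lagrange.basis Finset.univ η i).eval γ|) * (L * C) := by
          rw [Finset.sum_mul]
      _ ≤ Λ * (L * C) :=
          mul_le_mul_of_nonneg_right (hΛ.2 ⟨γ, hγI, rfl⟩)
            (mul_nonneg hL hC0)
  calc ‖∫ γ in μ..ξ, g γ‖ ≤ Λ * (L * C) * |ξ - μ| :=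
        intervalIntegral.norm_integral_le_of_norm_le_const hbound
    _ ≤ Λ * L * (b - a) * C := by
        nlinarith [mul_nonneg (mul_nonneg hΛ0 hL) hC0, mul_nonneg hΛ0 (mul_nonneg hL hC0)]
end

section
/- Under the assumptions of the contraction estimate (each $\Phi_i$ Lipschitz with constant $L$ and $\Lambda_{n-1} L |I| < 1$), the fixed point iteration $X^{k+1} = F[X^k]$ with initial constant curve $X^0(\xi) = x$ converges uniformly on $I$ to the unique solution of the interpolated ODE problem $X(\mu) = x$, $X'(\eta_i) = \Phi_i(X(\eta_i))$ for $i = 1, \dots, n$. -/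
open Polynomial Set Filter

noncomputable def polyAntideriv (p : Polynomial ℝ) : Polynomial ℝ :=
  ∑ k ∈ p.support, Polynomial.C (p.coeff k / (k + 1)) * Polynomial.X ^ (k + 1)

lemma derivative_polyAntideriv (p : Polynomial ℝ) :
    Polynomial.derivative (polyAntideriv p) = p := by
  unfold polyAntideriv
  rw [map_sum]
  conv_rhs => rw [p.as_sum_support_C_mul_X_pow]
  refine Finset.sum_congr rfl fun k _ => ?_
  rw [Polynomial.derivative_C_mul, Polynomial.derivative_X_pow]
  rw [← mul_assoc, ← Polynomial.C_mul]
  congr 2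
  push_cast
  field_simp

lemma natDegree_polyAntideriv_le {p : Polynomial ℝ} {n : ℕ} (h : p.degree < (n : ℕ)) :
    (polyAntideriv p).natDegree ≤ n := by
  by_cases hp : p = 0
  · simp [polyAntideriv, hp]
  · have hn : p.natDegree < n := (Polynomial.natDegree_lt_iff_degree_lt hp).2 h
    refine Polynomial.natDegree_sum_le_of_forall_le _ _ fun k hk => ?_
    calc (Polynomial.C (p.coeff k / (k + 1)) * Polynomial.X ^ (k + 1)).natDegree
        ≤ (Polynomial.C (p.coeff k / (k + 1))).natDegree
            + (Polynomial.X ^ (k + 1) : Polynomial ℝ).natDegree := Polynomial.natDegree_mul_le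
      _ ≤ k + 1 := by simp
      _ ≤ n := by have := Polynomial.le_natDegree_of_mem_supp k hk; omega

theorem stmt_3 (d n : ℕ) (a b : ℝ) (hab : a ≤ b)
    (η : Fin n → ℝ) (hη : Function.Injective η)
    (hηI : ∀ i, η i ∈ Set.Icc a b) (μ : ℝ) (hμ : μ ∈ Set.Icc a b)
    (Φ : Fin n → EuclideanSpace ℝ (Fin d) → EuclideanSpace ℝ (Fin d))
    (L Λ : ℝ) (hL : 0 ≤ L)
    (hlip : ∀ i y z, ‖Φ i y - Φ i z‖ ≤ L * ‖y - z‖)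
    (hΛ : IsGreatest
      ((fun ξ => ∑ i, |(Lagrange.basis Finset.univ η i).eval ξ|) '' Set.Icc a b) Λ)
    (hsmall : Λ * L * (b - a) < 1)
    (x : EuclideanSpace ℝ (Fin d))
    (F : (ℝ → EuclideanSpace ℝ (Fin d)) → ℝ → EuclideanSpace ℝ (Fin d))
    (hF : ∀ X ξ j, F X ξ j = x j +
      ∫ γ in μ..ξ, (Lagrange.interpolate Finset.univ η fun i => Φ i (X (η i)) j).eval γ)
    (Xit : ℕ → ℝ → EuclideanSpace ℝ (Fin d))
    (h0 : ∀ ξ, Xit 0 ξ = x) (hsucc : ∀ k, Xit (k + 1) = F (Xit k)) :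
    ∃ X : ℝ → EuclideanSpace ℝ (Fin d), IsPolyCurve d n X ∧
      X μ = x ∧ (∀ i, deriv X (η i) = Φ i (X (η i))) ∧
      TendstoUniformlyOn Xit X atTop (Set.Icc a b) ∧
      ∀ Y : ℝ → EuclideanSpace ℝ (Fin d), IsPolyCurve d n Y → Y μ = x →
        (∀ i, deriv Y (η i) = Φ i (Y (η i))) →
        ∀ t ∈ Set.Icc a b, Y t = X t := by
  have hInj : Set.InjOn η ↑(Finset.univ : Finset (Fin n)) := fun i _ j _ h => hη h
  have hcard : (Finset.univ : Finset (Fin n)).card = n := by simp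
  have hΛub : ∀ γ ∈ Set.Icc a b, ∑ i, |(Lagrange.basis Finset.univ η i).eval γ| ≤ Λ :=
    fun γ hγ => hΛ.2 ⟨γ, hγ, rfl⟩
  have hΛ0 : 0 ≤ Λ :=
    le_trans (Finset.sum_nonneg fun i _ => abs_nonneg _) (hΛub a ⟨le_refl a, hab⟩)
  set P : (Fin n → EuclideanSpace ℝ (Fin d)) → ℝ → EuclideanSpace ℝ (Fin d) :=
    fun w γ => ∑ i, ((Lagrange.basis Finset.univ η i).eval γ) • w i with hP
  have contP : ∀ w, Continuous (P w) := fun w =>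
    continuous_finset_sum _ fun i _ =>
      ((Lagrange.basis Finset.univ η i).continuous_aeval).smul continuous_const
  have intgP : ∀ w (c e : ℝ), IntervalIntegrable (P w) MeasureTheory.volume c e :=
    fun w c e => (contP w).intervalIntegrable c e
  have sumApply : ∀ (f : Fin n → EuclideanSpace ℝ (Fin d)) (j : Fin d),
      (∑ i, f i) j = ∑ i, f i j := fun f j =>
    map_sum (EuclideanSpace.proj j : EuclideanSpace ℝ (Fin d) →L[ℝ] ℝ) f Finset.univ
  have compP : ∀ w γ j, P w γ j =
      (Lagrange.interpolate Finset.univ η (fun i => w i j)).eval γ := by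
    intro w γ j
    rw [Lagrange.interpolate_apply, eval_finset_sum]
    simp only [hP]
    rw [sumApply]
    simp only [PiLp.smul_apply, smul_eq_mul, eval_mul, eval_C]
    exact Finset.sum_congr rfl fun i _ => mul_comm ((Lagrange.basis Finset.univ η i).eval γ) (w i j)
  have intComp : ∀ w (ξ : ℝ) j, (∫ γ in μ..ξ, P w γ) j = ∫ γ in μ..ξ, P w γ j := by
    intro w ξ j
    exact ((EuclideanSpace.proj j : EuclideanSpace ℝ (Fin d) →L[ℝ] ℝ).intervalIntegral_comp_comm
      (intgP w μ ξ)).symm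
  -- vector form of F
  have FveC : ∀ X ξ, F X ξ = x + ∫ γ in μ..ξ, P (fun i => Φ i (X (η i))) γ := by
    intro X ξ
    ext j
    rw [PiLp.add_apply, intComp, hF]
    congr 1
    refine intervalIntegral.integral_congr fun γ _ => ?_
    rw [compP]
  have hsub : ∀ ξ ∈ Set.Icc a b, Set.uIoc μ ξ ⊆ Set.Icc a b := fun ξ hξ =>
    Set.uIoc_subset_uIcc.trans (Set.uIcc_subset_Icc hμ hξ)
  -- the key estimate
  have hbound : ∀ (v w : Fin n → EuclideanSpace ℝ (Fin d)), ∀ ξ ∈ Set.Icc a b,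
      ‖(∫ γ in μ..ξ, P (fun i => Φ i (v i)) γ) - ∫ γ in μ..ξ, P (fun i => Φ i (w i)) γ‖
        ≤ Λ * L * (b - a) * ‖v - w‖ := by
    intro v w ξ hξ
    rw [← intervalIntegral.integral_sub (intgP _ μ ξ) (intgP _ μ ξ)]
    have h1 : ∀ γ ∈ Set.uIoc μ ξ,
        ‖P (fun i => Φ i (v i)) γ - P (fun i => Φ i (w i)) γ‖ ≤ Λ * (L * ‖v - w‖) := by
      intro γ hγ
      have hγ' := hsub ξ hξ hγ
      simp only [hP, ← Finset.sum_sub_distrib, ← smul_sub]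
      calc ‖∑ i, ((Lagrange.basis Finset.univ η i).eval γ) • (Φ i (v i) - Φ i (w i))‖
          ≤ ∑ i, ‖((Lagrange.basis Finset.univ η i).eval γ) • (Φ i (v i) - Φ i (w i))‖ :=
            norm_sum_le _ _
        _ ≤ ∑ i, |(Lagrange.basis Finset.univ η i).eval γ| * (L * ‖v - w‖) := by
            refine Finset.sum_le_sum fun i _ => ?_
            rw [norm_smul, Real.norm_eq_abs]
            refine mul_le_mul_of_nonneg_left ?_ (abs_nonneg _)
            refine (hlip i (v i) (w i)).trans (mul_le_mul_of_nonneg_left ?_ hL)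
            simpa using norm_le_pi_norm (v - w) i
        _ = (∑ i, |(Lagrange.basis Finset.univ η i).eval γ|) * (L * ‖v - w‖) := by
            rw [Finset.sum_mul]
        _ ≤ Λ * (L * ‖v - w‖) := by
            exact mul_le_mul_of_nonneg_right (hΛub γ hγ')
              (mul_nonneg hL (norm_nonneg _))
    calc ‖∫ γ in μ..ξ, (P (fun i => Φ i (v i)) γ - P (fun i => Φ i (w i)) γ)‖
        ≤ Λ * (L * ‖v - w‖) * |ξ - μ| :=
          intervalIntegral.norm_integral_le_of_norm_le_const h1
      _ ≤ Λ * L * (b - a) * ‖v - w‖ := by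
          have habs : |ξ - μ| ≤ b - a := by
            rw [abs_le]
            constructor <;> [linarith [hξ.1, hμ.2]; linarith [hξ.2, hμ.1]]
          calc Λ * (L * ‖v - w‖) * |ξ - μ| ≤ Λ * (L * ‖v - w‖) * (b - a) := by
                exact mul_le_mul_of_nonneg_left habs
                  (mul_nonneg hΛ0 (mul_nonneg hL (norm_nonneg _)))
            _ = Λ * L * (b - a) * ‖v - w‖ := by ring
  set C0 : ℝ := Λ * L * (b - a) with hC0def
  have hC0 : 0 ≤ C0 := mul_nonneg (mul_nonneg hΛ0 hL) (sub_nonneg.2 hab)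
  set K : NNReal := ⟨C0, hC0⟩ with hK
  set G : (Fin n → EuclideanSpace ℝ (Fin d)) → Fin n → EuclideanSpace ℝ (Fin d) :=
    fun v i => x + ∫ γ in μ..(η i), P (fun i' => Φ i' (v i')) γ with hG
  have hGdist : ∀ v w, dist (G v) (G w) ≤ C0 * dist v w := by
    intro v w
    rw [dist_eq_norm, dist_eq_norm]
    refine (pi_norm_le_iff_of_nonneg (mul_nonneg hC0 (norm_nonneg _))).2 fun i => ?_
    have : (G v - G w) i = (∫ γ in μ..(η i), P (fun i' => Φ i' (v i')) γ)
        - ∫ γ in μ..(η i), P (fun i' => Φ i' (w i')) γ := by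
      simp only [Pi.sub_apply, hG, add_sub_add_left_eq_sub]
    rw [this]
    exact hbound v w (η i) (hηI i)
  have hGlip : LipschitzWith K G := LipschitzWith.of_dist_le_mul hGdist
  have hcontr : ContractingWith K G := ⟨by rwa [← NNReal.coe_lt_one], hGlip⟩
  set vstar := ContractingWith.fixedPoint G hcontr with hvstar
  have hfix : G vstar = vstar := hcontr.fixedPoint_isFixedPt
  set X : ℝ → EuclideanSpace ℝ (Fin d) :=
    fun ξ => x + ∫ γ in μ..ξ, P (fun i => Φ i (vstar i)) γ with hX
  have hXnode : ∀ i, X (η i) = vstar i := fun i => congrFun hfix i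
  have hPqdeg : ∀ (r : Fin n → ℝ),
      (Lagrange.interpolate Finset.univ η r).degree < (n : ℕ) := by
    intro r
    have := Lagrange.degree_interpolate_lt r hInj
    rwa [hcard] at this
  have Xcomp : ∀ (w : Fin n → EuclideanSpace ℝ (Fin d)) (t : ℝ) (j : Fin d),
      (x + ∫ γ in μ..t, P w γ) j
        = x j + ∫ γ in μ..t, (Lagrange.interpolate Finset.univ η fun i => w i j).eval γ := by
    intro w t j
    rw [PiLp.add_apply, intComp]
    congr 1
    exact intervalIntegral.integral_congr fun γ _ => compP w γ j
  have polyInt : ∀ (q : Polynomial ℝ) (c e : ℝ),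
      ∫ γ in c..e, (Polynomial.derivative q).eval γ = q.eval e - q.eval c := by
    intro q c e
    exact intervalIntegral.integral_eq_sub_of_hasDerivAt
      (fun γ _ => q.hasDerivAt γ) (((Polynomial.derivative q).continuous_aeval).intervalIntegrable c e)
  refine ⟨X, ?_, ?_, ?_, ?_, ?_⟩
  · -- IsPolyCurve
    refine ⟨fun j => C (x j - (polyAntideriv
        (Lagrange.interpolate Finset.univ η fun i => Φ i (vstar i) j)).eval μ)
        + polyAntideriv (Lagrange.interpolate Finset.univ η fun i => Φ i (vstar i) j),
      fun j => ?_, fun t j => ?_⟩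
    · exact (natDegree_add_le _ _).trans
        (max_le (by simp) (natDegree_polyAntideriv_le (hPqdeg _)))
    · set q := Lagrange.interpolate Finset.univ η fun i => Φ i (vstar i) j with hq
      have h1 : X t j = x j + ∫ γ in μ..t, q.eval γ := Xcomp _ t j
      have h2 : ∫ γ in μ..t, q.eval γ
          = (polyAntideriv q).eval t - (polyAntideriv q).eval μ := by
        have := polyInt (polyAntideriv q) μ t
        rwa [derivative_polyAntideriv] at this
      rw [h1, h2, eval_add, eval_C]
      ring
  · -- X μ = x
    simp [hX]
  · -- deriv
    intro i
    have hderiv : deriv X (η i) = P (fun i' => Φ i' (vstar i')) (η i) := by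
      simp only [hX]
      rw [deriv_const_add]
      exact (contP _).deriv_integral _ μ (η i)
    have hnode : P (fun i' => Φ i' (vstar i')) (η i) = Φ i (vstar i) := by
      ext j
      rw [compP]
      exact Lagrange.eval_interpolate_at_node _ hInj (Finset.mem_univ i)
    rw [hderiv, hnode, hXnode i]
  · -- uniform convergence
    have hiter : ∀ k, (fun i => Xit k (η i)) = G^[k] (fun _ => x) := by
      intro k
      induction k with
      | zero => funext i; simp [h0]
      | succ m ih =>
        funext i
        rw [hsucc, FveC, Function.iterate_succ_apply', ← ih]
    have htend : Tendsto (fun k => dist (G^[k] (fun _ => x)) vstar) atTop (nhds 0) := by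
      have h := hcontr.tendsto_iterate_fixedPoint (fun _ => x)
      rwa [tendsto_iff_dist_tendsto_zero] at h
    rw [Metric.tendstoUniformlyOn_iff]
    intro ε hε
    have h1 : Tendsto (fun k => C0 * dist (G^[k] (fun _ => x)) vstar) atTop (nhds 0) := by
      simpa using htend.const_mul C0
    obtain ⟨N, hN⟩ := eventually_atTop.1 (h1.eventually (gt_mem_nhds hε))
    refine eventually_atTop.2 ⟨N + 1, fun k hk => ?_⟩
    obtain ⟨m, rfl⟩ : ∃ m, k = m + 1 := ⟨k - 1, by omega⟩
    intro ξ hξ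
    have hXit : Xit (m + 1) ξ
        = x + ∫ γ in μ..ξ, P (fun i => Φ i ((G^[m] (fun _ => x)) i)) γ := by
      rw [hsucc, FveC, ← hiter]
    calc dist (X ξ) (Xit (m + 1) ξ) ≤ C0 * dist (G^[m] (fun _ => x)) vstar := by
          rw [hXit, dist_eq_norm]
          simp only [hX, add_sub_add_left_eq_sub]
          refine (hbound vstar (G^[m] (fun _ => x)) ξ hξ).trans ?_
          rw [hC0def, dist_comm, dist_eq_norm]
      _ < ε := hN m (by omega)
  · -- uniqueness
    rintro Y ⟨p, hdeg, hYp⟩ hYμ hYd t _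
    have hYD : ∀ s : ℝ, HasDerivAt Y
        ((EuclideanSpace.equiv (Fin d) ℝ).symm fun j => (Polynomial.derivative (p j)).eval s) s := by
      intro s
      have h1 : HasDerivAt (fun u : ℝ => (fun j => (p j).eval u : Fin d → ℝ))
          (fun j => (Polynomial.derivative (p j)).eval s) s :=
        hasDerivAt_pi.2 fun j => (p j).hasDerivAt s
      have h2 := ((EuclideanSpace.equiv (Fin d) ℝ).symm.toContinuousLinearMap.hasFDerivAt).comp_hasDerivAt s h1
      have h3 : ((EuclideanSpace.equiv (Fin d) ℝ).symm.toContinuousLinearMap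
          ∘ fun u : ℝ => (fun j => (p j).eval u : Fin d → ℝ)) = Y := by
        funext u
        ext j
        exact (hYp u j).symm
      rwa [h3] at h2
    have hval : ∀ i j, (Polynomial.derivative (p j)).eval (η i) = Φ i (Y (η i)) j := by
      intro i j
      have h := hYd i
      rw [(hYD (η i)).deriv] at h
      exact congrArg (fun z : EuclideanSpace ℝ (Fin d) => z j) h
    have hpder : ∀ j, Polynomial.derivative (p j)
        = Lagrange.interpolate Finset.univ η fun i => Φ i (Y (η i)) j := by
      intro j
      have hdlt : (Polynomial.derivative (p j)).degree
          < ((Finset.univ : Finset (Fin n)).card : WithBot ℕ) := by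
        rw [hcard]
        by_cases hz : Polynomial.derivative (p j) = 0
        · rw [hz, degree_zero]
          exact WithBot.bot_lt_coe n
        · have hnz : (p j).natDegree ≠ 0 := by
            intro h0'
            exact hz (by rw [(Polynomial.eq_C_of_natDegree_eq_zero h0')]; simp)
          have := Polynomial.natDegree_derivative_lt hnz
          rw [Polynomial.degree_eq_natDegree hz]
          exact_mod_cast lt_of_lt_of_le this (hdeg j)
      refine (Lagrange.eq_interpolate hInj hdlt).trans ?_
      congr 1
      funext i
      exact hval i j
    have hYt : ∀ s : ℝ, Y s = x + ∫ γ in μ..s, P (fun i => Φ i (Y (η i))) γ := by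
      intro s
      ext j
      rw [Xcomp]
      rw [← hpder j, polyInt]
      have hxj : x j = (p j).eval μ := by rw [← hYμ]; exact hYp μ j
      rw [hxj, hYp s j]
      ring
    have hwfix : Function.IsFixedPt G fun i => Y (η i) := by
      funext i
      exact (hYt (η i)).symm
    have hw : (fun i => Y (η i)) = vstar := hcontr.fixedPoint_unique hwfix
    have hfun : (fun i => Φ i (Y (η i))) = fun i => Φ i (vstar i) := by
      funext i
      rw [← hw]
    rw [hYt t, hfun]
end
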